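/- Let A be a unital Banach algebra, G a group, and ρ : G → Aˣ a group homomorphism into the units of A with M := sup_g max(‖ρ(g)‖, ‖ρ(g)⁻¹‖) < ∞. Suppose G admits a left-invariant mean on ℓ^∞(G) and A is a dual Banach space with separately weak*-continuous multiplication. Then the centralizer ρ(G)′ = {a ∈ A : a·ρ(g) = ρ(g)·a for all g ∈ G} is a complemented subspace of A: there exists a bounded idempotent P : A →L A with range ρ(G)′ and ‖P‖ ≤ M². -/

import Mathlib

lemma weakdual_repr {Y : Type*} [NormedAddCommGroup Y] [NormedSpace ℂ Y]
    (F : WeakDual ℂ Y →ₗ[ℂ] ℂ) (hF : Continuous F) :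
    ∃ y : Y, ∀ φ : WeakDual ℂ Y, F φ = φ y := by
  classical
  have hws : @WithSeminorms ℂ (WeakDual ℂ Y) Y _ _ WeakDual.instModule ((topDualPairing ℂ Y).toSeminormFamily) _ :=
    LinearMap.weakBilin_withSeminorms _
  have hqc : Continuous ⇑F.toSeminorm := by
    rw [LinearMap.coe_toSeminorm]; exact hF.norm
  obtain ⟨s, C, hC0, hC⟩ := Seminorm.bound_of_continuous hws F.toSeminorm hqc
  set evalLM : Y → (WeakDual ℂ Y →ₗ[ℂ] ℂ) := fun y =>
    { toFun := fun φ => φ y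
      map_add' := fun φ ψ => rfl
      map_smul' := fun c φ => rfl } with hevalLM
  have hker : ⨅ i : s, LinearMap.ker (evalLM (i : Y)) ≤ LinearMap.ker F := by
    intro φ hφ
    simp only [Submodule.mem_iInf, LinearMap.mem_ker] at hφ ⊢
    have h2 : (s.sup ((topDualPairing ℂ Y).toSeminormFamily)) φ ≤ 0 := by
      apply Seminorm.finset_sup_apply_le le_rfl
      intro y hy
      have : φ y = 0 := hφ ⟨y, hy⟩
      show ‖(topDualPairing ℂ Y) φ y‖ ≤ 0
      simp [topDualPairing_apply, this]; exact this
    have h1 : ‖F φ‖ ≤ (C : ℝ) * ((s.sup ((topDualPairing ℂ Y).toSeminormFamily)) φ) := by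
      exact hC φ
    have h3 : ‖F φ‖ ≤ 0 := by nlinarith [C.coe_nonneg]
    simpa using le_antisymm h3 (norm_nonneg _)
  have hmem := mem_span_of_iInf_ker_le_ker (L := fun i : s => evalLM (i : Y)) hker
  obtain ⟨c, hc⟩ := (Submodule.mem_span_range_iff_exists_fun ℂ).1 hmem
  refine ⟨∑ i : s, c i • (i : Y), fun φ => ?_⟩
  rw [← hc]
  simp [evalLM, LinearMap.sum_apply, LinearMap.smul_apply, smul_eq_mul, map_sum, map_smul]; rfl

set_option maxHeartbeats 1000000 in
/-- In a unital dual Banach algebra with separately weak*-continuous multiplication,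
the centralizer of a uniformly bounded representation of an amenable group is the
range of a bounded idempotent of norm at most `M²`. -/
theorem stmt_17 {G A Y : Type*} [Group G]
    [NormedRing A] [NormedAlgebra ℂ A] [CompleteSpace A]
    [NormedAddCommGroup Y] [NormedSpace ℂ Y]
    (e : A ≃ₗᵢ[ℂ] (Y →L[ℂ] ℂ))
    (hmulR : ∀ a : A, Continuous fun φ : WeakDual ℂ Y => (e (e.symm φ * a) : WeakDual ℂ Y))
    (hmulL : ∀ a : A, Continuous fun φ : WeakDual ℂ Y => (e (a * e.symm φ) : WeakDual ℂ Y))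
    (ρ : G →* Aˣ)
    (M : ℝ) (hM0 : 0 ≤ M)
    (hM : ∀ g : G, ‖((ρ g : Aˣ) : A)‖ ≤ M) (hM' : ∀ g : G, ‖(((ρ g)⁻¹ : Aˣ) : A)‖ ≤ M)
    (μ : (G → ℂ) →ₗ[ℂ] ℂ)
    (hμbdd : ∀ (f : G → ℂ) (C : ℝ), 0 ≤ C → (∀ g, ‖f g‖ ≤ C) → ‖μ f‖ ≤ C)
    (hμ1 : μ (fun _ : G => (1 : ℂ)) = 1)
    (hμinv : ∀ (t : G) (f : G → ℂ), μ (fun g : G => f (t * g)) = μ f) :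
    ∃ P : A →L[ℂ] A,
      P.comp P = P ∧ ‖P‖ ≤ M ^ 2 ∧
      Set.range ⇑P = {a : A | ∀ g : G, a * ((ρ g : Aˣ) : A) = ((ρ g : Aˣ) : A) * a} := by
  classical
  set c : G → A → A := fun g a => ((ρ g : Aˣ) : A) * a * (((ρ g)⁻¹ : Aˣ) : A) with hcdef
  have hbound : ∀ (g : G) (a : A), ‖c g a‖ ≤ M ^ 2 * ‖a‖ := by
    intro g a
    have h1 : ‖((ρ g : Aˣ) : A) * a * (((ρ g)⁻¹ : Aˣ) : A)‖
        ≤ ‖((ρ g : Aˣ) : A)‖ * ‖a‖ * ‖(((ρ g)⁻¹ : Aˣ) : A)‖ := by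
      calc ‖((ρ g : Aˣ) : A) * a * (((ρ g)⁻¹ : Aˣ) : A)‖
          ≤ ‖((ρ g : Aˣ) : A) * a‖ * ‖(((ρ g)⁻¹ : Aˣ) : A)‖ := norm_mul_le _ _
        _ ≤ ‖((ρ g : Aˣ) : A)‖ * ‖a‖ * ‖(((ρ g)⁻¹ : Aˣ) : A)‖ :=
            mul_le_mul_of_nonneg_right (norm_mul_le _ _) (norm_nonneg _)
    have h2 := hM g; have h3 := hM' g
    show ‖((ρ g : Aˣ) : A) * a * (((ρ g)⁻¹ : Aˣ) : A)‖ ≤ M ^ 2 * ‖a‖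
    calc ‖((ρ g : Aˣ) : A) * a * (((ρ g)⁻¹ : Aˣ) : A)‖
        ≤ ‖((ρ g : Aˣ) : A)‖ * ‖a‖ * ‖(((ρ g)⁻¹ : Aˣ) : A)‖ := h1
      _ ≤ (M * ‖a‖) * M :=
          mul_le_mul (mul_le_mul h2 le_rfl (norm_nonneg a) hM0) h3 (norm_nonneg _)
            (by positivity)
      _ = M ^ 2 * ‖a‖ := by ring
  -- the averaged functional
  set ψ : A → (Y →L[ℂ] ℂ) := fun a =>
    LinearMap.mkContinuous
      { toFun := fun y => μ (fun g => e (c g a) y)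
        map_add' := by
          intro y z
          show μ (fun g => e (c g a) (y + z))
              = μ (fun g => e (c g a) y) + μ (fun g => e (c g a) z)
          rw [← map_add]
          congr 1; funext g; simp
        map_smul' := by
          intro r y
          show μ (fun g => e (c g a) (r • y)) = r • μ (fun g => e (c g a) y)
          rw [← map_smul]
          congr 1; funext g; simp }
      (M ^ 2 * ‖a‖)
      (fun y => by
        refine hμbdd _ _ (by positivity) fun g => ?_
        calc ‖e (c g a) y‖ ≤ ‖e (c g a)‖ * ‖y‖ := (e (c g a)).le_opNorm y
          _ ≤ (M ^ 2 * ‖a‖) * ‖y‖ := by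
              rw [e.norm_map]
              exact mul_le_mul_of_nonneg_right (hbound g a) (norm_nonneg _)) with hψdef
  have hψapp : ∀ (a : A) (y : Y), ψ a y = μ (fun g => e (c g a) y) := fun a y => rfl
  have hψnorm : ∀ a : A, ‖ψ a‖ ≤ M ^ 2 * ‖a‖ := fun a =>
    LinearMap.mkContinuous_norm_le _ (by positivity) _
  -- linearity in a
  set Pl : A →ₗ[ℂ] A :=
    { toFun := fun a => e.symm (ψ a)
      map_add' := by
        intro a b
        have hadd : ψ (a + b) = ψ a + ψ b := by
          ext y
          simp only [hψapp, ContinuousLinearMap.add_apply]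
          rw [← map_add]
          congr 1; funext g
          simp [hcdef, mul_add, add_mul]
        show e.symm (ψ (a + b)) = e.symm (ψ a) + e.symm (ψ b)
        rw [hadd, map_add]
      map_smul' := by
        intro r a
        have hsmul : ψ (r • a) = r • ψ a := by
          ext y
          simp only [hψapp, ContinuousLinearMap.smul_apply]
          rw [← map_smul]
          congr 1; funext g
          simp [hcdef, mul_smul_comm, smul_mul_assoc, smul_eq_mul]
        show e.symm (ψ (r • a)) = r • e.symm (ψ a)
        rw [hsmul, map_smul] } with hPldef
  have hPlnorm : ∀ a : A, ‖Pl a‖ ≤ M ^ 2 * ‖a‖ := by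
    intro a
    show ‖e.symm (ψ a)‖ ≤ M ^ 2 * ‖a‖
    rw [e.symm.norm_map]
    exact hψnorm a
  set P : A →L[ℂ] A := Pl.mkContinuous (M ^ 2) hPlnorm with hPdef
  have hPapp : ∀ a : A, P a = e.symm (ψ a) := fun a => rfl
  -- fixed points are fixed
  have hfix : ∀ a : A, (∀ g : G, a * ((ρ g : Aˣ) : A) = ((ρ g : Aˣ) : A) * a) → P a = a := by
    intro a ha
    have hca : ∀ g : G, c g a = a := by
      intro g
      rw [hcdef]
      simp only
      rw [← ha g, mul_assoc, Units.mul_inv, mul_one]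
    have : ψ a = e a := by
      ext y
      rw [hψapp]
      have : (fun g : G => e (c g a) y) = (e a y) • (fun _ : G => (1 : ℂ)) := by
        funext g; simp [hca g, smul_eq_mul]
      rw [this, map_smul, hμ1, smul_eq_mul, mul_one]
    rw [hPapp, this, e.symm_apply_apply]
  -- range lies in centralizer
  have hcomm : ∀ (a : A) (t : G),
      (P a) * ((ρ t : Aˣ) : A) = ((ρ t : Aˣ) : A) * (P a) := by
    intro a t
    have key : ((ρ t : Aˣ) : A) * (P a) * (((ρ t)⁻¹ : Aˣ) : A) = P a := by
      apply e.injective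
      ext y
      -- the conjugation functional
      set F : WeakDual ℂ Y →ₗ[ℂ] ℂ :=
        { toFun := fun φ => e (((ρ t : Aˣ) : A) * (e.symm φ * (((ρ t)⁻¹ : Aˣ) : A))) y
          map_add' := by intro φ χ; have h : e.symm (φ + χ) = e.symm φ + e.symm χ := map_add e.symm φ χ; simp [h, mul_add, add_mul]
          map_smul' := by intro r φ; have h : e.symm (r • φ) = r • e.symm φ := map_smul e.symm r φ; simp [h, mul_smul_comm, smul_mul_assoc] } with hFdef
      have hFcont : Continuous F := by
        have hid : Continuous fun ξ : Y →L[ℂ] ℂ =>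
            (StrongDual.toWeakDual ξ : WeakDual ℂ Y) :=
          NormedSpace.Dual.toWeakDual_continuous
        have h1 : Continuous fun φ : WeakDual ℂ Y =>
            (StrongDual.toWeakDual
              (e (e.symm φ * (((ρ t)⁻¹ : Aˣ) : A))) : WeakDual ℂ Y) :=
          hid.comp (hmulR (((ρ t)⁻¹ : Aˣ) : A))
        have h2 : Continuous fun φ : WeakDual ℂ Y =>
            (StrongDual.toWeakDual
              (e (((ρ t : Aˣ) : A) * e.symm φ)) : WeakDual ℂ Y) :=
          hid.comp (hmulL ((ρ t : Aˣ) : A))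
        have h3 : Continuous fun φ : WeakDual ℂ Y =>
            (StrongDual.toWeakDual
              (e (((ρ t : Aˣ) : A) * e.symm (StrongDual.toWeakDual
                (e (e.symm φ * (((ρ t)⁻¹ : Aˣ) : A)))))) : WeakDual ℂ Y) := h2.comp h1
        have h5 := (WeakDual.eval_continuous (𝕜 := ℂ) (E := Y) y).comp h3
        simp only [Function.comp_def, StrongDual.coe_toWeakDual,
          LinearIsometryEquiv.symm_apply_apply] at h5
        exact h5.congr fun φ => congrArg (fun b => e (((ρ t : Aˣ) : A) * b) y) (e.symm_apply_apply _)
      obtain ⟨y₀, hy₀⟩ := weakdual_repr F hFcont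
      have hFval : ∀ b : A,
          F (e b) = e (((ρ t : Aˣ) : A) * (b * (((ρ t)⁻¹ : Aˣ) : A))) y := by
        intro b; simp [hFdef]
      have hFconj : ∀ g : G,
          F (e (c g a)) = e (c (t * g) a) y := by
        intro g
        rw [hFval]
        congr 2
        rw [hcdef]
        simp only [map_mul, mul_inv_rev, Units.val_mul, mul_assoc]
      have lhs_eq : e (((ρ t : Aˣ) : A) * (P a) * (((ρ t)⁻¹ : Aˣ) : A)) y
          = (ψ a) y₀ := by
        have h1 : F (e (P a)) = e (((ρ t : Aˣ) : A) * (P a) * (((ρ t)⁻¹ : Aˣ) : A)) y := by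
          rw [hFval, mul_assoc]
        rw [← h1]; refine (hy₀ (e (P a))).trans ?_
        have : e (P a) = ψ a := by rw [hPapp, e.apply_symm_apply]
        rw [this]; rfl
      have rhs_eq : (ψ a) y₀ = (ψ a) y := by
        rw [hψapp, hψapp]
        have h1 : (fun g : G => e (c g a) y₀) = fun g : G => e (c (t * g) a) y := by
          funext g
          rw [← hFconj g]; exact (hy₀ _).symm
        rw [h1]
        exact hμinv t (fun g : G => e (c g a) y)
      have : e (P a) = ψ a := by rw [hPapp, e.apply_symm_apply]
      rw [lhs_eq, rhs_eq, this]
    have := congrArg (· * ((ρ t : Aˣ) : A)) key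
    simpa [mul_assoc, Units.inv_mul] using this.symm
  refine ⟨P, ?_, ?_, ?_⟩
  · ext a
    exact hfix (P a) (hcomm a)
  · exact LinearMap.mkContinuous_norm_le _ (by positivity) _
  · apply Set.eq_of_subset_of_subset
    · rintro _ ⟨a, rfl⟩ g
      exact hcomm a g
    · intro a ha
      exact ⟨a, hfix a ha⟩
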